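/- Given a one-step method Ψ_h of order p (so the fully converged shooting solution approximates the exact Euler–Lagrange boundary-value solution with global error O(h^p) in both position and velocity), a quadrature formula of order q, and a Lagrangian L Lipschitz continuous in both variables, the shooting-based discrete Lagrangian L_d(q_0, q_1; h) = h ∑_{i=0}^n b_i L(q^i, v^i) satisfies L_d^E(q_0, q_1; h) = L_d(q_0, q_1; h) + O(h^{min(p,q)+1}). -/

import Mathlib

open Asymptotics Finset

private lemma pow_isBigO_pow_of_le {a b : ℕ} (hab : b ≤ a) :
    (fun h : ℝ => h ^ a) =O[nhdsWithin 0 (Set.Ioi 0)] fun h : ℝ => h ^ b := by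
  rw [Asymptotics.isBigO_iff]
  refine ⟨1, ?_⟩
  have h1 : Set.Ioo (-1 : ℝ) 1 ∈ nhdsWithin (0 : ℝ) (Set.Ioi 0) :=
    nhdsWithin_le_nhds (Ioo_mem_nhds (by norm_num) (by norm_num))
  filter_upwards [h1, self_mem_nhdsWithin] with h hh hpos
  have h0 : (0 : ℝ) ≤ h := le_of_lt hpos
  have h1' : h ≤ 1 := le_of_lt hh.2
  rw [one_mul, Real.norm_eq_abs, Real.norm_eq_abs, abs_of_nonneg (pow_nonneg h0 _),
    abs_of_nonneg (pow_nonneg h0 _)]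
  exact pow_le_pow_of_le_one h0 h1' hab

/-- Given a one-step method of order `p` (so the fully converged shooting
solution approximates the exact Euler–Lagrange boundary-value solution with global error
`O(hᵖ)` in both position and velocity), a quadrature formula of order `q`, and a
Lagrangian `L` Lipschitz continuous in both variables, the shooting-based discrete
Lagrangian `L_d(q₀,q₁;h) = h ∑ᵢ bᵢ L(qⁱ, vⁱ)` satisfies
`L_d^E(q₀,q₁;h) = L_d(q₀,q₁;h) + O(h^{min(p,q)+1})`. -/
theorem shooting_discrete_lagrangian_order {m : ℕ} (n p q : ℕ)
    (b c : Fin (n + 1) → ℝ)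
    (L : (Fin m → ℝ) → (Fin m → ℝ) → ℝ) (C : NNReal)
    (hLip : LipschitzWith C fun x : (Fin m → ℝ) × (Fin m → ℝ) => L x.1 x.2)
    -- exact Euler--Lagrange boundary-value solution (as a function of the step `h`)
    (q01 v01 : ℝ → ℝ → (Fin m → ℝ))
    -- fully converged shooting points for the one-step method
    (qs vs : ℝ → Fin (n + 1) → (Fin m → ℝ))
    -- the quadrature formula is of order `q`
    (hquad : (fun h : ℝ => (∫ t in (0 : ℝ)..h, L (q01 h t) (v01 h t)) -
        h * ∑ i : Fin (n + 1), b i * L (q01 h (c i * h)) (v01 h (c i * h)))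
        =O[nhdsWithin 0 (Set.Ioi 0)] fun h : ℝ => h ^ (q + 1))
    -- the shooting solution has global error `O(hᵖ)` at the quadrature nodes
    (hq : ∀ i : Fin (n + 1), (fun h : ℝ => qs h i - q01 h (c i * h))
        =O[nhdsWithin 0 (Set.Ioi 0)] fun h : ℝ => h ^ p)
    (hv : ∀ i : Fin (n + 1), (fun h : ℝ => vs h i - v01 h (c i * h))
        =O[nhdsWithin 0 (Set.Ioi 0)] fun h : ℝ => h ^ p) :
    (fun h : ℝ => (∫ t in (0 : ℝ)..h, L (q01 h t) (v01 h t)) -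
        h * ∑ i : Fin (n + 1), b i * L (qs h i) (vs h i))
      =O[nhdsWithin 0 (Set.Ioi 0)] fun h : ℝ => h ^ (min p q + 1) := by
  set l := nhdsWithin (0 : ℝ) (Set.Ioi 0)
  -- per-node Lipschitz estimate
  have hLdiff : ∀ i : Fin (n + 1),
      (fun h : ℝ => L (q01 h (c i * h)) (v01 h (c i * h)) - L (qs h i) (vs h i))
        =O[l] fun h : ℝ => h ^ p := by
    intro i
    have hsum : (fun h : ℝ => ‖qs h i - q01 h (c i * h)‖ + ‖vs h i - v01 h (c i * h)‖)
        =O[l] fun h : ℝ => h ^ p := ((hq i).norm_left).add ((hv i).norm_left)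
    refine (IsBigO.of_bound (C : ℝ) ?_).trans hsum
    filter_upwards with h
    have key := hLip.dist_le_mul (q01 h (c i * h), v01 h (c i * h)) (qs h i, vs h i)
    rw [Real.dist_eq] at key
    have hd : dist ((q01 h (c i * h), v01 h (c i * h))) ((qs h i, vs h i)) ≤
        ‖qs h i - q01 h (c i * h)‖ + ‖vs h i - v01 h (c i * h)‖ := by
      rw [Prod.dist_eq]
      have h1 : dist (q01 h (c i * h)) (qs h i) = ‖qs h i - q01 h (c i * h)‖ := by
        rw [dist_eq_norm, ← norm_neg]; congr 1; abel
      have h2 : dist (v01 h (c i * h)) (vs h i) = ‖vs h i - v01 h (c i * h)‖ := by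
        rw [dist_eq_norm, ← norm_neg]; congr 1; abel
      rw [h1, h2]
      exact max_le (le_add_of_nonneg_right (norm_nonneg _))
        (le_add_of_nonneg_left (norm_nonneg _))
    calc ‖L (q01 h (c i * h)) (v01 h (c i * h)) - L (qs h i) (vs h i)‖
        ≤ (C : ℝ) * dist ((q01 h (c i * h), v01 h (c i * h))) ((qs h i, vs h i)) := key
      _ ≤ (C : ℝ) * (‖qs h i - q01 h (c i * h)‖ + ‖vs h i - v01 h (c i * h)‖) := by
          exact mul_le_mul_of_nonneg_left hd C.coe_nonneg
      _ ≤ (C : ℝ) * ‖‖qs h i - q01 h (c i * h)‖ + ‖vs h i - v01 h (c i * h)‖‖ := by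
          refine mul_le_mul_of_nonneg_left (le_abs_self _) C.coe_nonneg
  -- sum over nodes
  have hsum : (fun h : ℝ => ∑ i : Fin (n + 1),
      b i * (L (q01 h (c i * h)) (v01 h (c i * h)) - L (qs h i) (vs h i)))
        =O[l] fun h : ℝ => h ^ p := by
    refine Asymptotics.IsBigO.fun_sum fun i _ => (hLdiff i).const_mul_left (b i)
  -- multiply by h
  have hmul : (fun h : ℝ => h * ∑ i : Fin (n + 1),
      b i * (L (q01 h (c i * h)) (v01 h (c i * h)) - L (qs h i) (vs h i)))
        =O[l] fun h : ℝ => h ^ (p + 1) := by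
    have := (isBigO_refl (fun h : ℝ => h) l).mul hsum
    refine this.trans (IsBigO.of_bound 1 ?_)
    filter_upwards with h
    rw [one_mul]
    apply le_of_eq
    rw [← pow_succ']
  -- combine
  have hA := hquad.trans (pow_isBigO_pow_of_le (by omega : min p q + 1 ≤ q + 1))
  have hB := hmul.trans (pow_isBigO_pow_of_le (by omega : min p q + 1 ≤ p + 1))
  have := hA.add hB
  refine this.congr_left fun h => ?_
  simp only [Finset.mul_sum, mul_sub, Finset.sum_sub_distrib]
  ring
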